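/- Let n > 1 be a real number and let λ2, λ3, k be positive reals. Define f(x) = λ2 * x^n / (λ3^n + x^n) - k * x for x ≥ 0. If λ2 * (n-1)^((n-1)/n) > n * k * λ3, then f has exactly three nonnegative zeros: 0 and two positive zeros Tb_u < Tb_s. -/

import Mathlib

open Real

theorem stmt_0 (n lam2 lam3 k : ℝ) (hn : 1 < n) (h2 : 0 < lam2) (h3 : 0 < lam3)
    (hk : 0 < k)
    (f : ℝ → ℝ) (hf : ∀ x, f x = lam2 * x ^ n / (lam3 ^ n + x ^ n) - k * x)
    (hcond : lam2 * (n - 1) ^ ((n - 1) / n) > n * k * lam3) :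
    ∃ Tbu Tbs : ℝ, 0 < Tbu ∧ Tbu < Tbs ∧
      f 0 = 0 ∧ f Tbu = 0 ∧ f Tbs = 0 ∧
      ∀ x, 0 ≤ x → f x = 0 → x = 0 ∨ x = Tbu ∨ x = Tbs := by
  have hn0 : (0:ℝ) < n := by linarith
  have hn1 : (0:ℝ) < n - 1 := by linarith
  set g : ℝ → ℝ := fun x => lam2 * x ^ (n - 1) - k * x ^ n with hg
  set v : ℝ := k * lam3 ^ n with hv
  have hvpos : 0 < v := mul_pos hk (Real.rpow_pos_of_pos h3 n)
  set c : ℝ := lam2 * (n - 1) / (k * n) with hc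
  have hcpos : 0 < c := by positivity
  -- continuity of g
  have hgc : Continuous g := by
    apply Continuous.sub
    · exact continuous_const.mul (Real.continuous_rpow_const (by linarith))
    · exact continuous_const.mul (Real.continuous_rpow_const (by linarith))
  -- derivative of g on (0, ∞)
  have hderiv : ∀ x : ℝ, 0 < x →
      HasDerivAt g (x ^ (n - 2) * (lam2 * (n - 1) - k * n * x)) x := by
    intro x hx
    have h1 : HasDerivAt (fun x : ℝ => x ^ (n - 1)) ((n - 1) * x ^ (n - 1 - 1)) x :=
      Real.hasDerivAt_rpow_const (Or.inl hx.ne')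
    have h2' : HasDerivAt (fun x : ℝ => x ^ n) (n * x ^ (n - 1)) x :=
      Real.hasDerivAt_rpow_const (Or.inl hx.ne')
    have := (h1.const_mul lam2).sub (h2'.const_mul k)
    refine this.congr_deriv ?_
    have e1 : x ^ (n - 1) = x ^ (n - 2) * x := by
      rw [← Real.rpow_add_one hx.ne' (n - 2)]; ring_nf
    have e2 : x ^ (n - 1 - 1) = x ^ (n - 2) := by ring_nf
    rw [e1, e2]; ring
  -- g is strictly monotone on [0, c]
  have hmono : StrictMonoOn g (Set.Icc 0 c) := by
    apply strictMonoOn_of_deriv_pos (convex_Icc 0 c) hgc.continuousOn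
    intro x hx
    rw [interior_Icc] at hx
    rw [(hderiv x hx.1).deriv]
    have hx2 : (0:ℝ) < x ^ (n - 2) := Real.rpow_pos_of_pos hx.1 _
    have : k * n * x < lam2 * (n - 1) := by
      have := hx.2
      rw [hc, lt_div_iff₀ (by positivity)] at this
      linarith [this]
    nlinarith
  -- g is strictly antitone on [c, ∞)
  have hanti : StrictAntiOn g (Set.Ici c) := by
    apply strictAntiOn_of_deriv_neg (convex_Ici c) hgc.continuousOn
    intro x hx
    rw [interior_Ici] at hx
    have hxpos : 0 < x := lt_trans hcpos hx
    rw [(hderiv x hxpos).deriv]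
    have hx2 : (0:ℝ) < x ^ (n - 2) := Real.rpow_pos_of_pos hxpos _
    have hcx : c < x := hx
    have : lam2 * (n - 1) < k * n * x := by
      rw [hc, div_lt_iff₀ (by positivity)] at hcx
      linarith [hcx]
    nlinarith
  -- g 0 = 0
  have hg0 : g 0 = 0 := by
    simp [hg, Real.zero_rpow hn1.ne', Real.zero_rpow hn0.ne']
  -- g c > v
  have hgc_gt : v < g c := by
    -- raise the hypothesis to the n-th power
    have hlhs : 0 < n * k * lam3 := by positivity
    have hpow : (n * k * lam3) ^ n < (lam2 * (n - 1) ^ ((n - 1) / n)) ^ n :=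
      Real.rpow_lt_rpow hlhs.le hcond hn0
    have e1 : (lam2 * (n - 1) ^ ((n - 1) / n)) ^ n = lam2 ^ n * (n - 1) ^ (n - 1) := by
      rw [Real.mul_rpow h2.le (Real.rpow_nonneg hn1.le _), ← Real.rpow_mul hn1.le,
        div_mul_cancel₀ _ hn0.ne']
    have e2 : (n * k * lam3) ^ n = n ^ n * k ^ n * lam3 ^ n := by
      rw [Real.mul_rpow (by positivity) h3.le, Real.mul_rpow hn0.le hk.le]
    rw [e1, e2] at hpow
    -- compute g c
    have hgcval : g c = c ^ (n - 1) * (lam2 / n) := by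
      have e3 : c ^ n = c ^ (n - 1) * c := by
        rw [← Real.rpow_add_one hcpos.ne' (n - 1)]; ring_nf
      have e4 : k * c = lam2 * (n - 1) / n := by
        rw [hc]; field_simp
      have : g c = c ^ (n - 1) * (lam2 - k * c) := by
        rw [hg]; simp only []; rw [e3]; ring
      rw [this, e4]
      congr 1
      field_simp
      ring
    rw [hgcval]
    have hcn1 : c ^ (n - 1) = lam2 ^ (n - 1) * (n - 1) ^ (n - 1) / (k ^ (n - 1) * n ^ (n - 1)) := by
      rw [hc, Real.div_rpow (by positivity) (by positivity),
        Real.mul_rpow h2.le hn1.le, Real.mul_rpow hk.le hn0.le]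
    rw [hcn1, hv]
    rw [div_mul_eq_mul_div, lt_div_iff₀ (by positivity)]
    have ekn : k ^ (n - 1) * k = k ^ n := by
      rw [← Real.rpow_add_one hk.ne' (n - 1)]; ring_nf
    have eln : lam2 ^ (n - 1) * lam2 = lam2 ^ n := by
      rw [← Real.rpow_add_one h2.ne' (n - 1)]; ring_nf
    have enn : n ^ (n - 1) * n = n ^ n := by
      rw [← Real.rpow_add_one hn0.ne' (n - 1)]; ring_nf
    have erhs : lam2 ^ (n - 1) * (n - 1) ^ (n - 1) * (lam2 / n)
        = lam2 ^ n * (n - 1) ^ (n - 1) / n := by rw [← eln]; ring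
    rw [erhs, lt_div_iff₀ hn0]
    calc k * lam3 ^ n * (k ^ (n - 1) * n ^ (n - 1)) * n
        = n ^ n * k ^ n * lam3 ^ n := by rw [← enn, ← ekn]; ring
      _ < lam2 ^ n * (n - 1) ^ (n - 1) := hpow
  -- find the root Tbu in (0, c)
  obtain ⟨Tbu, hTbuIoo, hTbu⟩ : ∃ x ∈ Set.Ioo 0 c, g x = v := by
    have := intermediate_value_Ioo hcpos.le hgc.continuousOn (a := 0) (b := c)
    have hmem : v ∈ Set.Ioo (g 0) (g c) := by rw [hg0]; exact ⟨hvpos, hgc_gt⟩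
    obtain ⟨x, hx, hxv⟩ := this hmem
    exact ⟨x, hx, hxv⟩
  -- find X with g X < v
  obtain ⟨X, hXc, hgX⟩ : ∃ X, c < X ∧ g X < v := by
    refine ⟨max c (lam2 / k) + 1, by have := le_max_left c (lam2 / k); linarith, ?_⟩
    set X := max c (lam2 / k) + 1 with hX
    have hXpos : 0 < X := by
      have : c ≤ max c (lam2 / k) := le_max_left _ _
      positivity
    have hXk : lam2 < k * X := by
      have h' : lam2 / k ≤ max c (lam2 / k) := le_max_right _ _
      have : lam2 / k < X := by rw [hX]; linarith
      rw [div_lt_iff₀ hk] at this; linarith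
    have hneg : g X < 0 := by
      have e3 : X ^ n = X ^ (n - 1) * X := by
        rw [← Real.rpow_add_one hXpos.ne' (n - 1)]; ring_nf
      have hx1 : (0:ℝ) < X ^ (n - 1) := Real.rpow_pos_of_pos hXpos _
      rw [hg]; simp only []; rw [e3]
      nlinarith
    linarith
  -- find the root Tbs in (c, X)
  obtain ⟨Tbs, hTbsIoo, hTbs⟩ : ∃ x ∈ Set.Ioo c X, g x = v := by
    have := intermediate_value_Ioo' hXc.le hgc.continuousOn (a := c) (b := X)
    have hmem : v ∈ Set.Ioo (g X) (g c) := ⟨hgX, hgc_gt⟩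
    obtain ⟨x, hx, hxv⟩ := this hmem
    exact ⟨x, hx, hxv⟩
  -- relate zeros of f with g
  have hiff : ∀ x : ℝ, 0 < x → (f x = 0 ↔ g x = v) := by
    intro x hx
    have hDen : 0 < lam3 ^ n + x ^ n :=
      add_pos (Real.rpow_pos_of_pos h3 n) (Real.rpow_pos_of_pos hx n)
    rw [hf x, sub_eq_zero, div_eq_iff hDen.ne']
    have exn : x ^ n = x * x ^ (n - 1) := by
      rw [mul_comm, ← Real.rpow_add_one hx.ne' (n - 1)]; ring_nf
    constructor
    · intro h
      rw [hg]; simp only []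
      rw [hv]
      rw [exn] at h
      have h' : x * (lam2 * x ^ (n - 1) - k * (x * x ^ (n - 1)))
          = x * (k * lam3 ^ n) := by linear_combination h
      have h'' := mul_left_cancel₀ hx.ne' h'
      rw [exn]
      linarith [h'']
    · intro h
      rw [hg] at h; simp only [] at h
      rw [hv] at h
      rw [exn] at h ⊢
      linear_combination x * h
  have hf0 : f 0 = 0 := by
    rw [hf 0]
    simp [Real.zero_rpow hn0.ne']
  refine ⟨Tbu, Tbs, hTbuIoo.1, lt_trans hTbuIoo.2 hTbsIoo.1, hf0, ?_, ?_, ?_⟩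
  · exact (hiff Tbu hTbuIoo.1).mpr hTbu
  · exact (hiff Tbs (lt_trans hcpos hTbsIoo.1)).mpr hTbs
  · intro x hx hfx
    rcases eq_or_lt_of_le hx with h0 | h0
    · exact Or.inl h0.symm
    have hgx : g x = v := (hiff x h0).mp hfx
    rcases lt_trichotomy x c with hlt | heq | hgt
    · exact Or.inr (Or.inl (hmono.injOn ⟨h0.le, hlt.le⟩ ⟨hTbuIoo.1.le, hTbuIoo.2.le⟩
        (hgx.trans hTbu.symm)))
    · exfalso; rw [heq] at hgx; linarith [hgc_gt, hgx]
    · right; right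
      exact hanti.injOn (Set.mem_Ici.mpr hgt.le) (Set.mem_Ici.mpr hTbsIoo.1.le) (hgx.trans hTbs.symm)
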